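/- Let q ≥ 1 and let g: ℝⁿ → ℝ be q-times continuously differentiable with ‖D^q g(x) − D^q g(y)‖ ≤ (q−1)! L ‖x−y‖ for all x, y ∈ ℝⁿ (norm of q-linear forms induced by the Euclidean norm). Then for all x, s ∈ ℝⁿ, ‖∇g(x+s) − ∇_s T_q(x,s)‖ ≤ L ‖s‖^{q}. -/

import Mathlib

open scoped BigOperators
open Set Finset

section

variable {E : Type*} [NormedAddCommGroup E] [NormedSpace ℝ E]

/-- directional derivative operator -/
noncomputable def dirD (v : E) (h : E → ℝ) : E → ℝ := fun y => fderiv ℝ h y v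

lemma contDiff_dirD {k : ℕ} {h : E → ℝ} (hh : ContDiff ℝ (k + 1 : ℕ) h) (v : E) :
    ContDiff ℝ (k : ℕ) (dirD v h) := by
  have h1 : ContDiff ℝ (k : ℕ) (fderiv ℝ h) := by
    apply hh.fderiv_right
    norm_cast
  exact h1.clm_apply contDiff_const

lemma dirD_peel {k : ℕ} {h : E → ℝ} (hh : ContDiff ℝ (k + 1 : ℕ) h) (x : E)
    (m : Fin k → E) (v : E) :
    iteratedFDeriv ℝ (k + 1) h x (Fin.snoc m v) = iteratedFDeriv ℝ k (dirD v h) x m := by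
  have hfd : ContDiff ℝ (k : ℕ) (fderiv ℝ h) := by
    apply hh.fderiv_right; norm_cast
  have he : dirD v h = (ContinuousLinearMap.apply ℝ ℝ v) ∘ (fderiv ℝ h) := rfl
  rw [iteratedFDeriv_succ_apply_right, he,
    ContinuousLinearMap.iteratedFDeriv_comp_left _ hfd.contDiffAt le_rfl]
  simp

end
section

variable {E : Type*} [NormedAddCommGroup E] [NormedSpace ℝ E]


lemma dirD_comm {h : E → ℝ} (hh : ContDiff ℝ 2 h) (u v : E) :
    dirD u (dirD v h) = dirD v (dirD u h) := by
  have hdiff : Differentiable ℝ h := hh.differentiable (by norm_num)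
  have hfd : ContDiff ℝ 1 (fderiv ℝ h) := hh.fderiv_right (by norm_num)
  have key : ∀ y u v : E, dirD u (dirD v h) y = fderiv ℝ (fderiv ℝ h) y u v := by
    intro y u v
    have hc : DifferentiableAt ℝ (fderiv ℝ h) y := hfd.differentiable (by norm_num) y
    show fderiv ℝ (fun z => (fderiv ℝ h z) v) y u = _
    rw [fderiv_clm_apply hc (differentiableAt_const v)]
    simp
  funext y
  rw [key, key]
  exact second_derivative_symmetric (fun z => (hdiff z).hasFDerivAt)
    ((hfd.differentiable (by norm_num) y).hasFDerivAt) u v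

end
section

variable {E : Type*} [NormedAddCommGroup E] [NormedSpace ℝ E]

lemma update_diag_eq (k : ℕ) : ∀ (h : E → ℝ), ContDiff ℝ (k + 1 : ℕ) h → ∀ (x s p : E) (j : Fin (k + 1)),
    iteratedFDeriv ℝ (k + 1) h x (Function.update (fun _ => s) j p)
      = iteratedFDeriv ℝ k (dirD p h) x (fun _ => s) := by
  induction k with
  | zero =>
    intro h hh x s p j
    rw [iteratedFDeriv_succ_apply_right]
    have hj : Fin.last 0 = j := by apply Fin.ext; omega
    rw [hj, Function.update_self]
    simp [dirD]
  | succ k IH =>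
    intro h hh x s p j
    induction j using Fin.lastCases with
    | last =>
      have : Function.update (fun _ : Fin (k + 2) => s) (Fin.last (k + 1)) p
          = Fin.snoc (fun _ : Fin (k + 1) => s) p := by
        funext r
        induction r using Fin.lastCases with
        | last => simp
        | cast i => simp [Fin.snoc_castSucc, Function.update_of_ne (Fin.castSucc_lt_last i).ne]
      rw [this, dirD_peel hh]
    | cast i =>
      have hsnoc : Function.update (fun _ : Fin (k + 2) => s) i.castSucc p
          = Fin.snoc (Function.update (fun _ : Fin (k + 1) => s) i p) s := by
        funext r
        induction r using Fin.lastCases with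
        | last =>
          rw [Function.update_of_ne (Fin.castSucc_lt_last i).ne', Fin.snoc_last]
        | cast r =>
          rw [Fin.snoc_castSucc]
          rcases eq_or_ne r i with rfl | hri
          · simp
          · rw [Function.update_of_ne (by simpa using hri), Function.update_of_ne hri]
      have hsh : ContDiff ℝ (k + 1 : ℕ) (dirD s h) := contDiff_dirD hh s
      have hph : ContDiff ℝ (k + 1 : ℕ) (dirD p h) := contDiff_dirD hh p
      have h2 : ContDiff ℝ 2 h := hh.of_le (by exact_mod_cast Nat.le_add_left 2 k)
      rw [hsnoc, dirD_peel hh, IH _ hsh x s p i, dirD_comm h2,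
        ← dirD_peel hph x (fun _ => s) s]
      congr 1
      funext r
      induction r using Fin.lastCases with
      | last => simp
      | cast r => simp

end
section

variable {E : Type*} [NormedAddCommGroup E] [NormedSpace ℝ E]

lemma line_contDiff (x s : E) : ContDiff ℝ ⊤ (fun t : ℝ => x + t • s) :=
  contDiff_const.add (contDiff_id.smul contDiff_const)

lemma line_iteratedDeriv {m : ℕ} {f : E → ℝ} (hf : ContDiff ℝ (m : ℕ) f) (x s : E) :
    ∀ j : ℕ, j ≤ m → ∀ t : ℝ,
      iteratedDeriv j (fun u : ℝ => f (x + u • s)) t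
        = iteratedFDeriv ℝ j f (x + t • s) (fun _ => s) := by
  intro j
  induction j with
  | zero => intro _ t; simp
  | succ j IH =>
    intro hj t
    have hj' : j ≤ m := by omega
    rw [iteratedDeriv_succ]
    rw [funext (IH hj')]
    -- compute the derivative
    have hline : HasDerivAt (fun u : ℝ => x + u • s) s t := by
      simpa using ((hasDerivAt_id t).smul_const s).const_add x
    have hdiff : DifferentiableAt ℝ (iteratedFDeriv ℝ j f) (x + t • s) :=
      (hf.differentiable_iteratedFDeriv (by exact_mod_cast hj) ).differentiableAt
    have hcomp : HasDerivAt (fun u : ℝ => iteratedFDeriv ℝ j f (x + u • s))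
        (fderiv ℝ (iteratedFDeriv ℝ j f) (x + t • s) s) t :=
      hdiff.hasFDerivAt.comp_hasDerivAt t hline
    have hEv : HasDerivAt (fun u : ℝ => iteratedFDeriv ℝ j f (x + u • s) (fun _ => s))
        (fderiv ℝ (iteratedFDeriv ℝ j f) (x + t • s) s (fun _ => s)) t := by
      have := (ContinuousMultilinearMap.apply ℝ (fun _ : Fin j => E) ℝ
        (fun _ => s)).hasFDerivAt.comp_hasDerivAt t hcomp
      exact this
    rw [hEv.deriv]
    rw [iteratedFDeriv_succ_apply_left]
    rfl

end

lemma mono_helper {φ : ℝ → ℝ} {C : ℝ} {k : ℕ} (hφ : Differentiable ℝ φ) (h0 : φ 0 = 0)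
    (hb : ∀ t ∈ Icc (0:ℝ) 1, |deriv φ t| ≤ C * t ^ k) :
    ∀ t ∈ Icc (0:ℝ) 1, |φ t| ≤ C * t ^ (k + 1) / (k + 1) := by
  have hpoly : ∀ t : ℝ, HasDerivAt (fun u : ℝ => C * u ^ (k + 1) / (k + 1)) (C * t ^ k) t := by
    intro t
    have h1 : HasDerivAt (fun u : ℝ => u ^ (k + 1)) ((k + 1 : ℕ) * t ^ k) t := hasDerivAt_pow _ t
    have h2 := (h1.const_mul C).div_const ((k : ℝ) + 1)
    refine h2.congr_deriv ?_
    push_cast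
    field_simp
  have key : ∀ (ψ : ℝ → ℝ), Differentiable ℝ ψ → ψ 0 = 0 →
      (∀ t ∈ Icc (0:ℝ) 1, deriv ψ t ≤ C * t ^ k) →
      ∀ t ∈ Icc (0:ℝ) 1, ψ t ≤ C * t ^ (k + 1) / (k + 1) := by
    intro ψ hψ hψ0 hψb t ht
    have hmono : MonotoneOn (fun u => C * u ^ (k + 1) / (k + 1) - ψ u) (Icc 0 1) := by
      apply monotoneOn_of_deriv_nonneg (convex_Icc 0 1)
      · exact (Continuous.sub (by continuity) hψ.continuous).continuousOn
      · intro u _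
        exact ((hpoly u).differentiableAt.sub (hψ u)).differentiableWithinAt
      · intro u hu
        rw [interior_Icc] at hu
        rw [deriv_fun_sub (hpoly u).differentiableAt (hψ u), (hpoly u).deriv]
        have := hψb u (Ioo_subset_Icc_self hu)
        linarith
    have := hmono (left_mem_Icc.2 zero_le_one) ht ht.1
    simp only [hψ0] at this
    simp only [zero_pow (Nat.succ_ne_zero k), mul_zero, zero_div, sub_zero] at this
    linarith
  intro t ht
  rw [abs_le]
  constructor
  · have := key (fun u => -φ u) hφ.neg (by simp [h0])
      (fun u hu => by
        rw [deriv.fun_neg]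
        have := hb u hu; have := abs_le.1 this; linarith) t ht
    simpa using by linarith [this]
  · exact key φ hφ h0 (fun u hu => (abs_le.1 (hb u hu)).2) t ht


lemma taylor1d (m : ℕ) : ∀ (M : ℝ) (h : ℝ → ℝ), ContDiff ℝ (m : ℕ) h →
    (∀ t ∈ Icc (0:ℝ) 1, |iteratedDeriv m h t - iteratedDeriv m h 0| ≤ M * t) →
    ∀ t ∈ Icc (0:ℝ) 1,
      |h t - ∑ i ∈ range (m + 1), iteratedDeriv i h 0 * t ^ i / (Nat.factorial i)|
        ≤ M * t ^ (m + 1) / (Nat.factorial (m + 1)) := by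
  induction m with
  | zero =>
    intro M h _ hLip t ht
    simpa [iteratedDeriv_zero] using hLip t ht
  | succ m IH =>
    intro M h hh hLip t ht
    have hh' : ContDiff ℝ ((m : WithTop ℕ∞) + 1) h := by exact_mod_cast hh
    have hder : Differentiable ℝ h := hh.differentiable (by simp)
    have hh1 : ContDiff ℝ (m : ℕ) (deriv h) := by
      have := (contDiff_succ_iff_deriv.mp hh').2.2
      exact_mod_cast this
    set d : ℕ → ℝ := fun i => iteratedDeriv i h 0 with hd
    set φ : ℝ → ℝ := fun u => h u - ∑ i ∈ range (m + 2), d i * u ^ i / (Nat.factorial i) with hφ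
    have hkey : ∀ u : ℝ, HasDerivAt φ
        (deriv h u - ∑ i ∈ range (m + 1), d (i + 1) * u ^ i / (Nat.factorial i)) u := by
      intro u
      have hsum : HasDerivAt (fun u : ℝ => ∑ i ∈ range (m + 2), d i * u ^ i / (Nat.factorial i))
          (∑ i ∈ range (m + 2), d i * (i * u ^ (i - 1)) / (Nat.factorial i)) u := by
        apply HasDerivAt.fun_sum
        intro i _
        exact ((hasDerivAt_pow i u).const_mul (d i)).div_const _
      have hre : (∑ i ∈ range (m + 2), d i * (i * u ^ (i - 1)) / (Nat.factorial i))
          = ∑ i ∈ range (m + 1), d (i + 1) * u ^ i / (Nat.factorial i) := by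
        rw [Finset.sum_range_succ']
        simp only [Nat.cast_zero, zero_mul, mul_zero, Nat.factorial_zero, Nat.cast_one, zero_div,
          add_zero]
        apply Finset.sum_congr rfl
        intro i _
        rw [Nat.factorial_succ]
        have h1 : ((i : ℝ) + 1) ≠ 0 := by positivity
        have h2 : ((Nat.factorial i : ℝ)) ≠ 0 := by positivity
        push_cast
        field_simp
      have := ((hder u).hasDerivAt).sub (hsum)
      rwa [hre] at this
    have hφ0 : φ 0 = 0 := by
      simp only [hφ]
      rw [Finset.sum_eq_single 0]
      · simp [hd, iteratedDeriv_zero]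
      · intro i _ hi
        simp [zero_pow hi]
      · intro hc
        simp at hc
    have hIH := IH M (deriv h) hh1 (by
      intro u hu
      rw [← iteratedDeriv_succ'] at *
      exact hLip u hu)
    have hbound : ∀ u ∈ Icc (0:ℝ) 1, |deriv φ u| ≤ (M / (Nat.factorial (m + 1))) * u ^ (m + 1) := by
      intro u hu
      rw [(hkey u).deriv]
      have h2 := hIH u hu
      have hcoef : ∀ i, iteratedDeriv i (deriv h) 0 = d (i + 1) := by
        intro i
        show iteratedDeriv i (deriv h) 0 = iteratedDeriv (i + 1) h 0
        rw [iteratedDeriv_succ']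
      calc |deriv h u - ∑ i ∈ range (m + 1), d (i + 1) * u ^ i / (Nat.factorial i)|
          = |deriv h u - ∑ i ∈ range (m + 1), iteratedDeriv i (deriv h) 0 * u ^ i / (Nat.factorial i)| := by
            congr 2
            exact (Finset.sum_congr rfl (fun i _ => by rw [hcoef i])).symm
        _ ≤ M * u ^ (m + 1) / (Nat.factorial (m + 1)) := h2
        _ = (M / (Nat.factorial (m + 1))) * u ^ (m + 1) := by ring
    have hφdiff : Differentiable ℝ φ := fun u => (hkey u).differentiableAt
    have := mono_helper hφdiff hφ0 hbound t ht
    refine le_trans (le_of_eq rfl) (this.trans (le_of_eq ?_))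
    rw [Nat.factorial_succ (m + 1)]
    have h2 : ((Nat.factorial (m + 1) : ℝ)) ≠ 0 := by positivity
    push_cast
    field_simp
    try exact Or.inl trivial


noncomputable def taylorPoly {n : ℕ} (q : ℕ) (g : EuclideanSpace ℝ (Fin n) → ℝ)
    (x s : EuclideanSpace ℝ (Fin n)) : ℝ :=
  ∑ i ∈ Finset.range (q + 1),
    (1 / (Nat.factorial i) : ℝ) * iteratedFDeriv ℝ i g x (fun _ => s)

set_option maxHeartbeats 2000000 in
theorem taylor_gradient_remainder_bound {n : ℕ} (q : ℕ) (hq : 1 ≤ q) (L : ℝ)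
    (g : EuclideanSpace ℝ (Fin n) → ℝ) (hg : ContDiff ℝ q g)
    (hLip : ∀ x y : EuclideanSpace ℝ (Fin n),
      ‖iteratedFDeriv ℝ q g x - iteratedFDeriv ℝ q g y‖ ≤
        (Nat.factorial (q - 1) : ℝ) * L * ‖x - y‖)
    (x s : EuclideanSpace ℝ (Fin n)) :
    ‖gradient g (x + s) - gradient (fun u => taylorPoly q g x u) s‖ ≤
      L * ‖s‖ ^ q := by
  obtain ⟨m, rfl⟩ : ∃ m, q = m + 1 := ⟨q - 1, by omega⟩
  -- nonnegativity of the bound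
  have hnn : 0 ≤ L * ‖s‖ ^ (m + 1) := by
    rcases eq_or_ne s 0 with rfl | hs
    · simp
    · have hs' : 0 < ‖s‖ := norm_pos_iff.2 hs
      have h1 := hLip s 0
      have h2 : (0:ℝ) ≤ ‖iteratedFDeriv ℝ (m+1) g s - iteratedFDeriv ℝ (m+1) g 0‖ :=
        norm_nonneg _
      have h3 : (0:ℝ) < (Nat.factorial ((m+1) - 1) : ℝ) := by positivity
      simp only [sub_zero] at h1
      have hL : 0 ≤ L := by nlinarith [mul_pos h3 hs']
      positivity
  -- the derivative of the Taylor polynomial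
  set P : EuclideanSpace ℝ (Fin n) → ℝ := fun u => taylorPoly (m + 1) g x u with hPdef
  set diag : ∀ i : ℕ, EuclideanSpace ℝ (Fin n) →L[ℝ] (Fin i → EuclideanSpace ℝ (Fin n)) :=
    fun i => ContinuousLinearMap.pi (fun _ : Fin i => ContinuousLinearMap.id ℝ (EuclideanSpace ℝ (Fin n))) with hdiag
  set Dfull : EuclideanSpace ℝ (Fin n) →L[ℝ] ℝ := ∑ i ∈ range (m + 2),
    (1 / (Nat.factorial i) : ℝ) •
      (((iteratedFDeriv ℝ i g x).linearDeriv (fun _ => s)).comp (diag i)) with hDfull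
  have hPderiv : HasFDerivAt P Dfull s := by
    rw [hPdef, hDfull]
    have : (fun u => taylorPoly (m + 1) g x u)
        = fun u => ∑ i ∈ range (m + 2), (1 / (Nat.factorial i) : ℝ) *
            iteratedFDeriv ℝ i g x (fun _ => u) := rfl
    rw [this]
    apply HasFDerivAt.fun_sum
    intro i _
    have h1 := (iteratedFDeriv ℝ i g x).hasFDerivAt (fun _ : Fin i => s)
    have h2 : HasFDerivAt (diag i) (diag i) s := (diag i).hasFDerivAt
    have h3 := h1.comp s h2
    exact h3.const_mul _
  -- value of the derivative
  have hDval : ∀ p : EuclideanSpace ℝ (Fin n), Dfull p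
      = ∑ k ∈ range (m + 1),
          iteratedFDeriv ℝ k (dirD p g) x (fun _ => s) * 1 ^ k / (Nat.factorial k) := by
    intro p
    rw [hDfull]
    rw [ContinuousLinearMap.sum_apply]
    rw [Finset.sum_range_succ']
    have hzero : ((1 / (Nat.factorial 0) : ℝ) •
        (((iteratedFDeriv ℝ 0 g x).linearDeriv (fun _ => s)).comp (diag 0))) p = 0 := by
      simp [ContinuousMultilinearMap.linearDeriv]
    rw [hzero, add_zero]
    apply Finset.sum_congr rfl
    intro k hk
    have hsm : ContDiff ℝ (k + 1 : ℕ) g := by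
      apply hg.of_le
      have : k + 1 ≤ m + 1 := by
        have := Finset.mem_range.1 hk; omega
      exact_mod_cast this
    simp only [ContinuousLinearMap.smul_apply, ContinuousLinearMap.comp_apply,
      ContinuousMultilinearMap.linearDeriv_apply, smul_eq_mul]
    have hup : ∀ j : Fin (k + 1),
        iteratedFDeriv ℝ (k+1) g x (Function.update (fun _ => s) j ((diag (k+1)) p j))
          = iteratedFDeriv ℝ k (dirD p g) x (fun _ => s) := by
      intro j
      have : (diag (k+1)) p j = p := rfl
      rw [this]
      exact update_diag_eq k g hsm x s p j
    rw [Finset.sum_congr rfl (fun j _ => hup j)]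
    rw [Finset.sum_const, Finset.card_univ, Fintype.card_fin]
    rw [Nat.factorial_succ]
    have h1 : ((k : ℝ) + 1) ≠ 0 := by positivity
    have h2 : ((Nat.factorial k : ℝ)) ≠ 0 := by positivity
    push_cast
    field_simp
    ring
  -- the one-dimensional function
  have key : ∀ p : EuclideanSpace ℝ (Fin n),
      |fderiv ℝ g (x + s) p - Dfull p| ≤ L * ‖s‖ ^ (m + 1) * ‖p‖ := by
    intro p
    set f : EuclideanSpace ℝ (Fin n) → ℝ := dirD p g with hfdef
    have hgm : ContDiff ℝ (m + 1 : ℕ) g := hg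
    have hf : ContDiff ℝ (m : ℕ) f := contDiff_dirD hgm p
    set h : ℝ → ℝ := fun t => f (x + t • s) with hhdef
    have hline : ContDiff ℝ (m : ℕ) (fun t : ℝ => x + t • s) :=
      contDiff_const.add (contDiff_id.smul contDiff_const)
    have hh : ContDiff ℝ (m : ℕ) h := hf.comp hline
    set M : ℝ := (Nat.factorial m : ℝ) * L * (‖s‖ ^ (m + 1) * ‖p‖) with hM
    have hsnocprod : (∏ i : Fin (m + 1), ‖(Fin.snoc (fun _ => s) p : Fin (m + 1) → EuclideanSpace ℝ (Fin n)) i‖)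
        = ‖s‖ ^ m * ‖p‖ := by
      rw [Fin.prod_univ_castSucc]
      simp
    have hLip1 : ∀ t ∈ Icc (0:ℝ) 1,
        |iteratedDeriv m h t - iteratedDeriv m h 0| ≤ M * t := by
      intro t ht
      have e1 : ∀ u : ℝ, iteratedDeriv m h u
          = iteratedFDeriv ℝ (m + 1) g (x + u • s) (Fin.snoc (fun _ => s) p) := by
        intro u
        rw [hhdef]
        rw [line_iteratedDeriv hf x s m le_rfl u]
        rw [dirD_peel hgm (x + u • s) (fun _ => s) p]
      rw [e1 t, e1 0, ← ContinuousMultilinearMap.sub_apply, ← Real.norm_eq_abs]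
      refine le_trans (ContinuousMultilinearMap.le_opNorm _ _) ?_
      have hb1 : ‖iteratedFDeriv ℝ (m+1) g (x + t • s) - iteratedFDeriv ℝ (m+1) g (x + (0:ℝ) • s)‖
          ≤ (Nat.factorial m : ℝ) * L * (t * ‖s‖) := by
        have hL2 := hLip (x + t • s) (x + (0:ℝ) • s)
        simp only [Nat.add_sub_cancel] at hL2
        have heq : ‖(x + t • s) - (x + (0:ℝ) • s)‖ = t * ‖s‖ := by
          rw [zero_smul, add_zero, add_sub_cancel_left, norm_smul, Real.norm_eq_abs,
            abs_of_nonneg ht.1]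
        rwa [heq] at hL2
      refine le_trans (mul_le_mul_of_nonneg_right hb1
        (Finset.prod_nonneg fun i _ => norm_nonneg _)) ?_
      simp only [Fin.prod_univ_castSucc, Fin.snoc_castSucc, Fin.snoc_last,
        Finset.prod_const, Finset.card_univ, Fintype.card_fin]
      refine le_of_eq ?_
      rw [hM]
      ring
    have htay := taylor1d m M h hh hLip1 1 ⟨zero_le_one, le_rfl⟩
    have hh1 : h 1 = fderiv ℝ g (x + s) p := by
      rw [hhdef]
      simp only [one_smul]
      rfl
    have hsum : (∑ i ∈ range (m + 1), iteratedDeriv i h 0 * (1:ℝ) ^ i / (Nat.factorial i))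
        = Dfull p := by
      rw [hDval p]
      apply Finset.sum_congr rfl
      intro i hi
      have : iteratedDeriv i h 0 = iteratedFDeriv ℝ i (dirD p g) x (fun _ => s) := by
        rw [hhdef, line_iteratedDeriv hf x s i (by exact Nat.lt_succ_iff.1 (Finset.mem_range.1 hi)) 0]
        rw [zero_smul, add_zero]
      rw [this]
    rw [hh1, hsum] at htay
    have hLA : 0 ≤ L * ‖s‖ ^ (m + 1) * ‖p‖ := mul_nonneg hnn (norm_nonneg p)
    have heq2 : M * (1:ℝ) ^ (m + 1) / (Nat.factorial (m + 1) : ℝ)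
        = (L * ‖s‖ ^ (m + 1) * ‖p‖) / ((m : ℝ) + 1) := by
      rw [hM, Nat.factorial_succ]
      have h2 : ((Nat.factorial m : ℝ)) ≠ 0 := by positivity
      have h3 : ((m : ℝ) + 1) ≠ 0 := by positivity
      push_cast
      field_simp
      ring
    rw [heq2] at htay
    exact htay.trans (div_le_self hLA (by linarith))
  -- final assembly
  have hgradP : gradient P s = (InnerProductSpace.toDual ℝ (EuclideanSpace ℝ (Fin n))).symm
      (fderiv ℝ P s) := rfl
  have hgradg : gradient g (x + s) = (InnerProductSpace.toDual ℝ (EuclideanSpace ℝ (Fin n))).symm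
      (fderiv ℝ g (x + s)) := rfl
  set v := gradient g (x + s) - gradient P s with hv
  have hinner : (inner ℝ v v : ℝ) = fderiv ℝ g (x + s) v - Dfull v := by
    rw [hv, inner_sub_left, hgradg, hgradP, InnerProductSpace.toDual_symm_apply,
      InnerProductSpace.toDual_symm_apply, hPderiv.fderiv]
  have h1 : ‖v‖ ^ 2 ≤ L * ‖s‖ ^ (m + 1) * ‖v‖ := by
    rw [← real_inner_self_eq_norm_sq, hinner]
    exact le_trans (le_abs_self _) (key v)
  rcases eq_or_lt_of_le (norm_nonneg v) with hz | hpos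
  · rw [← hz]
    exact hnn
  · nlinarith [h1, hpos]
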